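/- Let n ≥ 2, α > 0, and suppose N(λ)/λ^{(n−1)/2} → n·ω_{n−1}·α/(2π)^{n−1} as λ → ∞, and that for every k > 0 outside a closed discrete set 𝒟 ⊂ [0,∞), h_k = N(k(k+n−2)). Then k^{1−n}·h_k → 2α/((n−1)!·ω_n) as k → ∞ (k ranging over positive reals), provided h is non-decreasing in k. -/

import Mathlib

open Filter

/-- The Lebesgue volume of the unit ball in `ℝ^m`. -/
noncomputable def unitBallVol (m : ℕ) : ℝ :=
  Real.pi ^ ((m : ℝ) / 2) / Real.Gamma ((m : ℝ) / 2 + 1)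

lemma unitBallVol_pos (m : ℕ) : 0 < unitBallVol m := by
  have h1 : (0:ℝ) < (m:ℝ)/2 + 1 := by positivity
  exact div_pos (Real.rpow_pos_of_pos Real.pi_pos _) (Real.Gamma_pos_of_pos h1)

lemma vol_prod (n : ℕ) (hn : 2 ≤ n) :
    (n:ℝ) * unitBallVol (n-1) * unitBallVol n * (Nat.factorial (n-1) : ℝ)
      = 2 * (2 * Real.pi) ^ (n - 1) := by
  have hc : ((n - 1 : ℕ) : ℝ) = (n:ℝ) - 1 := by
    have : 1 ≤ n := by omega
    push_cast [this]; ring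
  have hdup := Real.Gamma_mul_Gamma_add_half (((n:ℝ)+1)/2)
  have e1 : ((n:ℝ)+1)/2 + 1/2 = (n:ℝ)/2 + 1 := by ring
  have e2 : 2 * (((n:ℝ)+1)/2) = (n:ℝ) + 1 := by ring
  rw [e1, e2, Real.Gamma_nat_eq_factorial] at hdup
  have hgam1 : Real.Gamma (((n-1:ℕ):ℝ)/2 + 1) = Real.Gamma (((n:ℝ)+1)/2) := by
    rw [hc]; ring_nf
  -- π powers
  have hpi : Real.pi ^ (((n-1:ℕ):ℝ)/2) * Real.pi ^ ((n:ℝ)/2)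
      = Real.pi ^ (n-1) * Real.sqrt Real.pi := by
    rw [hc, ← Real.rpow_add Real.pi_pos]
    have : ((n:ℝ)-1)/2 + (n:ℝ)/2 = ((n-1:ℕ):ℝ) + 1/2 := by rw [hc]; ring
    rw [this, Real.rpow_add Real.pi_pos, Real.rpow_natCast,
      ← Real.sqrt_eq_rpow]
  have h2 : (2:ℝ)^(1-((n:ℝ)+1)) = ((2:ℝ)^n)⁻¹ := by
    have e : (1 - ((n:ℝ)+1)) = -(n:ℝ) := by ring
    rw [e, Real.rpow_neg (by norm_num), Real.rpow_natCast]
  have hsq : Real.sqrt Real.pi ≠ 0 := by positivity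
  have hf : ((Nat.factorial n : ℝ)) ≠ 0 := by positivity
  have key : unitBallVol (n-1) * unitBallVol n
      = 2^n * Real.pi^(n-1) / (Nat.factorial n : ℝ) := by
    unfold unitBallVol
    rw [div_mul_div_comm, hpi, hgam1, hdup, h2]
    field_simp
  have hfac : ((Nat.factorial n : ℝ)) = n * (Nat.factorial (n-1) : ℝ) := by
    rw [← Nat.mul_factorial_pred (by omega : n ≠ 0)]; push_cast; ring
  have h2n : (2:ℝ)^n = 2 * 2^(n-1) := by
    rw [← pow_succ']; congr 1; omega
  have e3 : (n:ℝ) * unitBallVol (n-1) * unitBallVol n * (Nat.factorial (n-1) : ℝ)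
      = (n:ℝ) * (unitBallVol (n-1) * unitBallVol n) * (Nat.factorial (n-1) : ℝ) := by ring
  rw [e3, key, mul_pow, h2n, hfac]
  have hf1 : ((Nat.factorial (n-1) : ℝ)) ≠ 0 := by positivity
  field_simp

lemma exists_notMem_Ioo (D : Set ℝ) (hDdisc : ∀ x : ℝ, ¬ AccPt x (Filter.principal D))
    (a b : ℝ) (hab : a < b) : ∃ x, x ∈ Set.Ioo a b ∧ x ∉ D := by
  by_contra hcon
  push_neg at hcon
  apply hDdisc ((a+b)/2)
  rw [accPt_iff_nhds]
  intro U hU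
  obtain ⟨ε, hε, hball⟩ := Metric.mem_nhds_iff.mp hU
  set x : ℝ := (a+b)/2 with hx
  set δ : ℝ := min (ε/2) ((b-a)/4) with hδdef
  have hδ : 0 < δ := lt_min (by linarith) (by linarith)
  have hδ1 : δ ≤ ε/2 := min_le_left _ _
  have hδ2 : δ ≤ (b-a)/4 := min_le_right _ _
  refine ⟨x + δ, ⟨hball ?_, hcon _ ⟨by simp only [hx]; linarith, by simp only [hx]; linarith⟩⟩,
    by linarith⟩
  simp only [Metric.mem_ball, Real.dist_eq]
  rw [add_sub_cancel_left, abs_of_pos hδ]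
  linarith

lemma aux_tendsto (n : ℕ) (hn : 2 ≤ n) (Nf : ℝ → ℕ) (c : ℝ)
    (hweyl : Tendsto (fun lam : ℝ => (Nf lam : ℝ) / lam ^ (((n : ℝ) - 1) / 2)) atTop (nhds c)) :
    Tendsto (fun k : ℝ => (Nf (k * (k + n - 2)) : ℝ) / k ^ (n - 1)) atTop (nhds c) := by
  have hn2 : (2:ℝ) ≤ (n:ℝ) := by exact_mod_cast hn
  have hlam : Tendsto (fun k : ℝ => k * (k + (n:ℝ) - 2)) atTop atTop := by
    apply tendsto_atTop_mono' atTop _ tendsto_id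
    filter_upwards [eventually_ge_atTop (1:ℝ)] with k hk
    show k ≤ k * (k + (n:ℝ) - 2)
    nlinarith
  have h1 := hweyl.comp hlam
  have hr0 : Tendsto (fun k : ℝ => 1 + ((n:ℝ) - 2) / k) atTop (nhds 1) := by
    have h0 : Tendsto (fun k : ℝ => ((n:ℝ) - 2) / k) atTop (nhds 0) :=
      Filter.Tendsto.div_atTop tendsto_const_nhds tendsto_id
    have := Filter.Tendsto.const_add (1:ℝ) h0
    simpa using this
  have hr : Tendsto (fun k : ℝ => (1 + ((n:ℝ) - 2) / k) ^ (((n:ℝ) - 1) / 2)) atTop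
      (nhds 1) := by
    have := hr0.rpow (tendsto_const_nhds (x := ((n:ℝ) - 1) / 2)) (Or.inl one_ne_zero)
    simpa using this
  have hmul := h1.mul hr
  rw [mul_one] at hmul
  apply hmul.congr'
  filter_upwards [eventually_ge_atTop (1:ℝ)] with k hk
  have hk0 : 0 < k := by linarith
  have hbase : 0 < 1 + ((n:ℝ) - 2) / k := by
    have : 0 ≤ ((n:ℝ) - 2) / k := div_nonneg (by linarith) (le_of_lt hk0)
    linarith
  have hfac : k * (k + (n:ℝ) - 2) = k ^ 2 * (1 + ((n:ℝ) - 2) / k) := by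
    field_simp; ring
  have hpow : (k * (k + (n:ℝ) - 2)) ^ (((n:ℝ) - 1) / 2)
      = k ^ (n - 1) * (1 + ((n:ℝ) - 2) / k) ^ (((n:ℝ) - 1) / 2) := by
    rw [hfac, Real.mul_rpow (by positivity) (le_of_lt hbase)]
    congr 1
    rw [← Real.rpow_natCast k 2, ← Real.rpow_mul (le_of_lt hk0), ← Real.rpow_natCast k (n-1)]
    congr 1
    have : ((n - 1 : ℕ) : ℝ) = (n:ℝ) - 1 := by
      have : 1 ≤ n := by omega
      push_cast [this]; ring
    rw [this]; ring
  have hp1 : (0:ℝ) < k ^ (n - 1) := by positivity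
  have hp2 : (0:ℝ) < (1 + ((n:ℝ) - 2) / k) ^ (((n:ℝ) - 1) / 2) := Real.rpow_pos_of_pos hbase _
  simp only [Function.comp]
  rw [hpow, div_mul_eq_mul_div, mul_comm (k ^ (n-1)), ← div_div,
    mul_div_assoc, div_self (ne_of_gt hp2), mul_one]

theorem dimension_asymptotics (n : ℕ) (hn : 2 ≤ n) (α : ℝ) (hα : 0 < α)
    (Nf : ℝ → ℕ) (h : ℝ → ℕ) (hNmono : Monotone Nf)
    (hhmono : MonotoneOn h (Set.Ioi 0))
    (D : Set ℝ) (hD0 : D ⊆ Set.Ici 0) (hDclosed : IsClosed D)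
    (hDdisc : ∀ x : ℝ, ¬ AccPt x (Filter.principal D))
    (hweyl : Tendsto (fun lam : ℝ => (Nf lam : ℝ) / lam ^ (((n : ℝ) - 1) / 2)) atTop
      (nhds ((n : ℝ) * unitBallVol (n - 1) * α / (2 * Real.pi) ^ (n - 1))))
    (heq : ∀ k : ℝ, 0 < k → k ∉ D → h k = Nf (k * (k + n - 2))) :
    Tendsto (fun k : ℝ => (h k : ℝ) / k ^ (n - 1)) atTop
      (nhds (2 * α / ((Nat.factorial (n - 1) : ℝ) * unitBallVol n))) := by
  have hn2 : (2:ℝ) ≤ (n:ℝ) := by exact_mod_cast hn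
  have hUBn := unitBallVol_pos n
  have hfacpos : (0:ℝ) < (Nat.factorial (n-1) : ℝ) := by positivity
  have h2pi : (0:ℝ) < (2 * Real.pi) ^ (n - 1) := by positivity
  have htarget : (n : ℝ) * unitBallVol (n - 1) * α / (2 * Real.pi) ^ (n - 1)
      = 2 * α / ((Nat.factorial (n - 1) : ℝ) * unitBallVol n) := by
    rw [div_eq_div_iff (ne_of_gt h2pi) (by positivity)]
    linear_combination α * vol_prod n hn
  rw [← htarget]
  set c : ℝ := (n : ℝ) * unitBallVol (n - 1) * α / (2 * Real.pi) ^ (n - 1) with hcdef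
  have G := aux_tendsto n hn Nf c hweyl
  have hsub : Tendsto (fun k : ℝ => k - 1) atTop atTop := by
    simpa [sub_eq_add_neg] using tendsto_atTop_add_const_right atTop (-1:ℝ) tendsto_id
  have hadd : Tendsto (fun k : ℝ => k + 1) atTop atTop :=
    tendsto_atTop_add_const_right atTop (1:ℝ) tendsto_id
  have hinv : Tendsto (fun k : ℝ => k⁻¹) atTop (nhds 0) := tendsto_inv_atTop_zero
  have hratioL : Tendsto (fun k : ℝ => ((k - 1)/k) ^ (n - 1)) atTop (nhds 1) := by
    have h0 : Tendsto (fun k : ℝ => (k-1)/k) atTop (nhds 1) := by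
      have heq' : (fun k : ℝ => (k-1)/k) =ᶠ[atTop] fun k => 1 - k⁻¹ := by
        filter_upwards [eventually_ne_atTop (0:ℝ)] with k hk
        field_simp
      rw [tendsto_congr' heq']
      simpa using Filter.Tendsto.const_sub (1:ℝ) hinv
    simpa using h0.pow (n-1)
  have hratioU : Tendsto (fun k : ℝ => ((k + 1)/k) ^ (n - 1)) atTop (nhds 1) := by
    have h0 : Tendsto (fun k : ℝ => (k+1)/k) atTop (nhds 1) := by
      have heq' : (fun k : ℝ => (k+1)/k) =ᶠ[atTop] fun k => 1 + k⁻¹ := by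
        filter_upwards [eventually_ne_atTop (0:ℝ)] with k hk
        field_simp
      rw [tendsto_congr' heq']
      simpa using Filter.Tendsto.const_add (1:ℝ) hinv
    simpa using h0.pow (n-1)
  have hL : Tendsto (fun k : ℝ => (Nf ((k-1) * ((k-1) + (n:ℝ) - 2)) : ℝ) / k ^ (n-1)) atTop
      (nhds c) := by
    have hm := (G.comp hsub).mul hratioL
    rw [mul_one] at hm
    apply hm.congr'
    filter_upwards [eventually_ge_atTop (2:ℝ)] with k hk
    have hk1 : (0:ℝ) < k - 1 := by linarith
    have hk0 : (0:ℝ) < k := by linarith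
    have hb : ((k-1):ℝ)^(n-1) ≠ 0 := pow_ne_zero _ (ne_of_gt hk1)
    have hb2 : (k:ℝ)^(n-1) ≠ 0 := pow_ne_zero _ (ne_of_gt hk0)
    simp only [Function.comp]
    rw [div_pow, div_mul_div_comm, mul_comm (((k-1):ℝ)^(n-1)),
      mul_div_mul_right _ _ hb]
  have hU : Tendsto (fun k : ℝ => (Nf ((k+1) * ((k+1) + (n:ℝ) - 2)) : ℝ) / k ^ (n-1)) atTop
      (nhds c) := by
    have hm := (G.comp hadd).mul hratioU
    rw [mul_one] at hm
    apply hm.congr'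
    filter_upwards [eventually_ge_atTop (2:ℝ)] with k hk
    have hk1 : (0:ℝ) < k + 1 := by linarith
    have hk0 : (0:ℝ) < k := by linarith
    have hb : ((k+1):ℝ)^(n-1) ≠ 0 := pow_ne_zero _ (ne_of_gt hk1)
    simp only [Function.comp]
    rw [div_pow, div_mul_div_comm, mul_comm (((k+1):ℝ)^(n-1)),
      mul_div_mul_right _ _ hb]
  refine tendsto_of_tendsto_of_tendsto_of_le_of_le' hL hU ?_ ?_
  · filter_upwards [eventually_ge_atTop (2:ℝ)] with k hk
    have hk0 : (0:ℝ) < k := by linarith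
    obtain ⟨k₁, ⟨hk₁a, hk₁b⟩, hk₁D⟩ := exists_notMem_Ioo D hDdisc (k-1) k (by linarith)
    have hk₁pos : (0:ℝ) < k₁ := by linarith
    have e := heq k₁ hk₁pos hk₁D
    have mono1 : Nf ((k-1)*((k-1) + (n:ℝ) - 2)) ≤ Nf (k₁*(k₁ + (n:ℝ) - 2)) := by
      apply hNmono
      nlinarith
    have mono2 : h k₁ ≤ h k := hhmono (Set.mem_Ioi.mpr hk₁pos) (Set.mem_Ioi.mpr hk0)
      (le_of_lt hk₁b)
    have hle : (Nf ((k-1)*((k-1) + (n:ℝ) - 2)) : ℝ) ≤ (h k : ℝ) := by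
      have : Nf ((k-1)*((k-1) + (n:ℝ) - 2)) ≤ h k := le_trans mono1 (e ▸ mono2)
      exact_mod_cast this
    gcongr
  · filter_upwards [eventually_ge_atTop (2:ℝ)] with k hk
    have hk0 : (0:ℝ) < k := by linarith
    obtain ⟨k₂, ⟨hk₂a, hk₂b⟩, hk₂D⟩ := exists_notMem_Ioo D hDdisc k (k+1) (by linarith)
    have hk₂pos : (0:ℝ) < k₂ := by linarith
    have e := heq k₂ hk₂pos hk₂D
    have mono1 : Nf (k₂*(k₂ + (n:ℝ) - 2)) ≤ Nf ((k+1)*((k+1) + (n:ℝ) - 2)) := by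
      apply hNmono
      nlinarith
    have mono2 : h k ≤ h k₂ := hhmono (Set.mem_Ioi.mpr hk0) (Set.mem_Ioi.mpr hk₂pos)
      (le_of_lt hk₂a)
    have hle : (h k : ℝ) ≤ (Nf ((k+1)*((k+1) + (n:ℝ) - 2)) : ℝ) := by
      have : h k ≤ Nf ((k+1)*((k+1) + (n:ℝ) - 2)) := le_trans (e ▸ mono2) mono1
      exact_mod_cast this
    gcongr
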